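/- arXiv:math/0408159 — 6 statements merged into one kernel-verified Lean document; each statement's English description precedes it below -/
import Mathlib

section
/- Let K be a subfield of ℝ that is a finite extension of ℚ and is totally real, and let f(X) = X³ + pX + q with p, q ∈ K be irreducible over K. Let L ⊆ ℂ be the splitting field of f over K. Then L is totally real if and only if for every field embedding σ : K → ℝ one has 27·σ(q)² + 4·σ(p)³ < 0 (i.e., the discriminant Δ₃ = −(27q² + 4p³) of f is totally positive in K). -/
open Polynomial

lemma factA (p q : ℝ) (hlt : 27*q^2+4*p^3 < 0) (z : ℂ) (hz : z^3 + p*z + q = 0) :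
    z.im = 0 := by
  by_contra hb
  set a := z.re
  set b := z.im
  have hre' := congrArg Complex.re hz
  have him' := congrArg Complex.im hz
  simp [pow_succ, Complex.mul_re, Complex.mul_im] at hre' him'
  have hre : a^3 - 3*a*b^2 + p*a + q = 0 := by linear_combination hre'
  have him : 3*a^2*b - b^3 + p*b = 0 := by linear_combination him'
  have hp' : p = b^2 - 3*a^2 := by
    have h2 : b * (3*a^2 - b^2 + p) = 0 := by linear_combination him
    rcases mul_eq_zero.1 h2 with h | h
    · exact absurd h hb
    · linarith
  have hq' : q = 2*a*(a^2+b^2) := by rw [hp'] at hre; nlinarith [hre]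
  have : 27*q^2+4*p^3 = 4*b^2*(9*a^2+b^2)^2 := by rw [hp', hq']; ring
  nlinarith [sq_nonneg b, sq_nonneg (9*a^2+b^2), sq_nonneg (b*(9*a^2+b^2))]

lemma factB (p q : ℝ)
    (hsep : (X^3 + C (p:ℂ) * X + C (q:ℂ)).Separable)
    (hge : ¬ 27*q^2+4*p^3 < 0) :
    ∃ z : ℂ, z^3 + p*z + q = 0 ∧ z.im ≠ 0 := by
  by_contra hcon
  push_neg at hcon
  set g : ℂ[X] := X^3 + C (p:ℂ) * X + C (q:ℂ) with hg
  have hg0 : g ≠ 0 := hsep.ne_zero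
  have hdeg : g.natDegree = 3 := by unfold g; compute_degree!
  have hcard : g.roots.card = 3 := by
    rw [← hdeg]
    exact (Polynomial.splits_iff_card_roots.mp (IsAlgClosed.splits g))
  have hnodup : g.roots.Nodup := g.nodup_roots hsep
  obtain ⟨r1, r2, r3, hM⟩ := Multiset.card_eq_three.mp hcard
  rw [hM] at hnodup
  simp [Multiset.nodup_cons] at hnodup
  obtain ⟨⟨h12, h13⟩, h23⟩ := hnodup
  have hroot : ∀ r ∈ g.roots, r^3 + p*r + q = 0 := by
    intro r hr
    have : g.IsRoot r := (Polynomial.mem_roots hg0).mp hr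
    simpa [hg, IsRoot, eval_add, eval_mul, eval_pow] using this
  have h1 := hroot r1 (by rw [hM]; simp)
  have h2 := hroot r2 (by rw [hM]; simp)
  have h3 := hroot r3 (by rw [hM]; simp)
  -- all roots real
  have e1 : r1 = ((r1.re : ℝ) : ℂ) := by
    have := hcon r1 h1; exact (Complex.ext (by simp) (by simp [this]))
  have e2 : r2 = ((r2.re : ℝ) : ℂ) := by
    have := hcon r2 h2; exact (Complex.ext (by simp) (by simp [this]))
  have e3 : r3 = ((r3.re : ℝ) : ℂ) := by
    have := hcon r3 h3; exact (Complex.ext (by simp) (by simp [this]))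
  set x1 := r1.re; set x2 := r2.re; set x3 := r3.re
  rw [e1] at h1 h12 h13
  rw [e2] at h2 h12 h23
  rw [e3] at h3 h13 h23
  have k1 : x1^3 + p*x1 + q = 0 := by exact_mod_cast h1
  have k2 : x2^3 + p*x2 + q = 0 := by exact_mod_cast h2
  have k3 : x3^3 + p*x3 + q = 0 := by exact_mod_cast h3
  have n12 : x1 ≠ x2 := fun h => h12 (by rw [h])
  have n13 : x1 ≠ x3 := fun h => h13 (by rw [h])
  have n23 : x2 ≠ x3 := fun h => h23 (by rw [h])
  -- derive the algebra
  have d12 : x1^2 + x1*x2 + x2^2 + p = 0 := by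
    have h : (x1 - x2) * (x1^2 + x1*x2 + x2^2 + p) = 0 := by linear_combination k1 - k2
    rcases mul_eq_zero.1 h with h | h
    · exact absurd (by linarith [sub_eq_zero.mp h] : x1 = x2) n12
    · exact h
  have d13 : x1^2 + x1*x3 + x3^2 + p = 0 := by
    have h : (x1 - x3) * (x1^2 + x1*x3 + x3^2 + p) = 0 := by linear_combination k1 - k3
    rcases mul_eq_zero.1 h with h | h
    · exact absurd (sub_eq_zero.mp h) n13
    · exact h
  have hs : x1 + x2 + x3 = 0 := by
    have h : (x2 - x3) * (x1 + x2 + x3) = 0 := by linear_combination d12 - d13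
    rcases mul_eq_zero.1 h with h | h
    · exact absurd (sub_eq_zero.mp h) n23
    · exact h
  have hp' : p = -(x1^2 + x1*x2 + x2^2) := by linarith [d12]
  have hq' : q = -x1^3 - p*x1 := by linarith [k1]
  have hx3 : x3 = -x1 - x2 := by linarith [hs]
  have key : 27*q^2 + 4*p^3 = -(((x1-x2)*(x1-x3)*(x2-x3))^2) := by
    rw [hq', hp', hx3]; ring
  have hne : (x1-x2)*(x1-x3)*(x2-x3) ≠ 0 :=
    mul_ne_zero (mul_ne_zero (sub_ne_zero.mpr n12) (sub_ne_zero.mpr n13))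
      (sub_ne_zero.mpr n23)
  have : 0 < ((x1-x2)*(x1-x3)*(x2-x3))^2 := by positivity
  linarith [key, this, not_lt.mp hge]

lemma ext_lemma {F E : Type} [Field F] [Field E] [Algebra F E]
    [Algebra.IsAlgebraic F E] (α : E) (ρ : F →+* ℂ) (β : ℂ)
    (hβ : Polynomial.eval₂ ρ β (minpoly F α) = 0) :
    ∃ τ : E →+* ℂ, τ α = β := by
  have hint : IsIntegral F α := (Algebra.IsAlgebraic.isAlgebraic α).isIntegral
  let Fα := IntermediateField.adjoin F ({α} : Set E)
  let e : AdjoinRoot (minpoly F α) ≃ₐ[F] Fα :=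
    IntermediateField.adjoinRootEquivAdjoin F hint
  let ρ' : Fα →+* ℂ := (AdjoinRoot.lift ρ β hβ).comp (e.symm : Fα →+* AdjoinRoot (minpoly F α))
  letI : Algebra Fα ℂ := ρ'.toAlgebra
  haveI : Algebra.IsAlgebraic Fα E := Algebra.IsAlgebraic.tower_top (K := F) Fα
  haveI : Module.IsTorsionFree Fα ℂ :=
    Module.IsTorsionFree.of_smul_eq_zero fun r m h => by
      rw [Algebra.smul_def, mul_eq_zero] at h; exact h.imp_left (map_eq_zero _).mp
  let τ : E →ₐ[Fα] ℂ := IsAlgClosed.lift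
  refine ⟨τ.toRingHom, ?_⟩
  have hmem : α ∈ Fα := IntermediateField.mem_adjoin_simple_self F α
  have h1 : α = algebraMap Fα E ⟨α, hmem⟩ := rfl
  rw [h1]
  have h2 : τ.toRingHom (algebraMap Fα E ⟨α, hmem⟩) = ρ' ⟨α, hmem⟩ := τ.commutes _
  rw [h2]
  have h3 : e.symm ⟨α, hmem⟩ = AdjoinRoot.root (minpoly F α) := by
    have := IntermediateField.adjoinRootEquivAdjoin_apply_root F hint
    exact (AlgEquiv.symm_apply_eq e).mpr this.symm
  show AdjoinRoot.lift ρ β hβ (e.symm ⟨α, hmem⟩) = β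
  rw [h3, AdjoinRoot.lift_root]

lemma aux_alg {F E : Type} [Field F] [Field E] (φ : F →+* E) (S : Set E)
    (hS : ∀ z ∈ S, ∃ g : F[X], g.Monic ∧ Polynomial.eval₂ φ z g = 0) :
    ∀ z ∈ Subfield.closure S, ∃ g : F[X], g.Monic ∧ Polynomial.eval₂ φ z g = 0 := by
  letI : Algebra F E := φ.toAlgebra
  have halg : algebraMap F E = φ := rfl
  let A : Subfield E :=
    { (integralClosure F E).toSubring with
      inv_mem' := fun x hx => IsIntegral.inv (hx : IsIntegral F x) }
  have hSA : S ⊆ ↑A := by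
    intro z hz
    obtain ⟨g, hmon, hev⟩ := hS z hz
    exact (⟨g, hmon, by rw [halg]; exact hev⟩ : IsIntegral F z)
  intro z hz
  have : z ∈ A := Subfield.closure_le.mpr hSA hz
  obtain ⟨g, hmon, hev⟩ := (this : IsIntegral F z)
  exact ⟨g, hmon, by rw [← halg]; exact hev⟩

open Polynomial in
/-- For a totally real finite extension `K ⊆ ℝ` of ℚ and an irreducible
cubic `f = X³ + pX + q` over `K`, the splitting field `L ⊆ ℂ` of `f` over `K` is totally
real iff the discriminant `-(27q² + 4p³)` is totally positive in `K`, i.e., iff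
`27·σ(q)² + 4·σ(p)³ < 0` for every embedding `σ : K → ℝ`. -/
theorem cubic_splitting_field_totally_real_iff
    (K : Subfield ℝ) (hfin : FiniteDimensional ℚ K)
    (hKtr : ∀ σ : K →+* ℂ, ∀ x : K, (σ x).im = 0)
    (p q : ℝ) (hp : p ∈ K) (hq : q ∈ K)
    (hirr : Irreducible (X ^ 3 + C (⟨p, hp⟩ : K) * X + C (⟨q, hq⟩ : K)))
    (L : Subfield ℂ)
    (hL : L = Subfield.closure
      ((Complex.ofReal '' ↑K) ∪ {z : ℂ | z ^ 3 + (p : ℂ) * z + (q : ℂ) = 0})) :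
    (∀ σ : L →+* ℂ, ∀ x : L, (σ x).im = 0) ↔
      (∀ σ : K →+* ℝ, 27 * σ ⟨q, hq⟩ ^ 2 + 4 * σ ⟨p, hp⟩ ^ 3 < 0) := by
  subst hL
  set S : Set ℂ := (Complex.ofReal '' ↑K) ∪ {z : ℂ | z ^ 3 + (p : ℂ) * z + (q : ℂ) = 0}
    with hS
  set L : Subfield ℂ := Subfield.closure S with hLdef
  set f : Polynomial K := X ^ 3 + C (⟨p, hp⟩ : K) * X + C (⟨q, hq⟩ : K) with hf
  have hfmonic : f.Monic := by unfold f; monicity!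
  -- the inclusion of K into ℂ
  let ιC : K →+* ℂ := Complex.ofRealHom.comp K.subtype
  have hKL : ∀ x : K, ((x : ℝ) : ℂ) ∈ L := fun x =>
    Subfield.subset_closure (Or.inl ⟨(x : ℝ), x.2, rfl⟩)
  -- the inclusion of K into L
  let ι : K →+* L :=
    { toFun := fun x => ⟨((x : ℝ) : ℂ), hKL x⟩
      map_one' := by ext; push_cast; ring
      map_mul' := fun a b => by ext; push_cast; ring
      map_zero' := by ext; push_cast; ring
      map_add' := fun a b => by ext; push_cast; ring }
  have hιcomp : L.subtype.comp ι = ιC := rfl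
  letI : Algebra K L := ι.toAlgebra
  have halgmap : (algebraMap K L : K →+* L) = ι := rfl
  -- every element of S is integral over K
  have hSint : ∀ z ∈ S, ∃ g : Polynomial K, g.Monic ∧ Polynomial.eval₂ ιC z g = 0 := by
    rintro z (⟨k, hk, rfl⟩ | hz)
    · refine ⟨X - C ⟨k, hk⟩, monic_X_sub_C _, ?_⟩
      simp [ιC]
    · refine ⟨f, hfmonic, ?_⟩
      simp only [hf, eval₂_add, eval₂_mul, eval₂_pow, eval₂_X, eval₂_C]
      simpa [ιC] using hz
  -- L is algebraic over K
  haveI halgKL : Algebra.IsAlgebraic K L := by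
    constructor
    intro x
    obtain ⟨g, hmon, hev⟩ := aux_alg ιC S hSint x.1 x.2
    have : Polynomial.eval₂ ι x g = 0 := by
      apply Subtype.ext
      show L.subtype (Polynomial.eval₂ ι x g) = L.subtype 0
      rw [Polynomial.hom_eval₂, hιcomp, map_zero]
      exact hev
    exact (IsIntegral.isAlgebraic ⟨g, hmon, by rw [halgmap]; exact this⟩)
  -- a root of f in L
  have hgC : (X ^ 3 + C (p:ℂ) * X + C (q:ℂ) : Polynomial ℂ).degree = 3 := by
    compute_degree!
  obtain ⟨z₀, hz₀⟩ := Complex.exists_root (f := X ^ 3 + C (p:ℂ) * X + C (q:ℂ))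
    (by rw [hgC]; norm_num)
  have hz₀' : z₀ ^ 3 + (p:ℂ) * z₀ + q = 0 := by
    simpa [IsRoot] using hz₀
  have hz₀L : z₀ ∈ L := Subfield.subset_closure (Or.inr hz₀')
  set α : L := ⟨z₀, hz₀L⟩ with hα
  have haeval : (Polynomial.aeval α) f = 0 := by
    apply Subtype.ext
    have hcomm := Polynomial.hom_eval₂ f ι L.subtype α
    rw [hιcomp] at hcomm
    show (L.subtype) (Polynomial.eval₂ ι α f) = 0
    rw [hcomm]
    simp only [hf, eval₂_add, eval₂_mul, eval₂_pow, eval₂_X, eval₂_C]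
    simpa [ιC] using hz₀'
  have hminpoly : minpoly K α = f :=
    (minpoly.eq_of_irreducible_of_monic hirr haeval hfmonic).symm
  constructor
  · -- forward
    intro h σ
    by_contra hge
    set a : ℝ := σ ⟨p, hp⟩ with ha
    set b : ℝ := σ ⟨q, hq⟩ with hb
    let σ' : K →+* ℂ := Complex.ofRealHom.comp σ
    have hsepK : f.Separable := hirr.separable
    have hmap : f.map σ' = X ^ 3 + C (a:ℂ) * X + C (b:ℂ) := by
      simp [hf, Polynomial.map_add, Polynomial.map_mul, Polynomial.map_pow, σ', ha, hb]
    have hsepC : (X ^ 3 + C (a:ℂ) * X + C (b:ℂ)).Separable := by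
      rw [← hmap]; exact hsepK.map
    obtain ⟨β, hβeq, hβim⟩ := factB a b hsepC hge
    have hβ : Polynomial.eval₂ σ' β (minpoly K α) = 0 := by
      rw [hminpoly]
      simp only [hf, eval₂_add, eval₂_mul, eval₂_pow, eval₂_X, eval₂_C]
      simpa [σ'] using hβeq
    obtain ⟨τ, hτ⟩ := ext_lemma α σ' β hβ
    exact hβim (by rw [← hτ]; exact h τ α)
  · -- backward
    intro h τ x
    set σ₀ : K →+* ℂ := τ.comp ι with hσ₀
    have him0 : ∀ k : K, (σ₀ k).im = 0 := hKtr σ₀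
    let σ : K →+* ℝ :=
      { toFun := fun k => (σ₀ k).re
        map_one' := by simp
        map_mul' := fun a b => by
          simp [Complex.mul_re, him0 a, him0 b]
        map_zero' := by simp
        map_add' := fun a b => by simp }
    have hσval : ∀ k : K, σ₀ k = ((σ k : ℝ) : ℂ) := fun k =>
      Complex.ext (by rfl) (by simpa using him0 k)
    have hdisc := h σ
    have main : ∀ z, ∀ hz : z ∈ Subfield.closure S, (τ ⟨z, hz⟩).im = 0 := by
      intro z hz
      induction hz using Subfield.closure_induction with
      | mem w hw =>
        rcases hw with ⟨k, hk, rfl⟩ | hw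
        · have : (⟨(k:ℂ), _⟩ : L) = ι ⟨k, hk⟩ := rfl
          rw [this]
          exact him0 ⟨k, hk⟩
        · -- w is a root of the cubic
          have hwL : w ∈ L := Subfield.subset_closure (Or.inr hw)
          have heq : (⟨w, hwL⟩ : L) ^ 3 + ι ⟨p, hp⟩ * ⟨w, hwL⟩ + ι ⟨q, hq⟩ = 0 := by
            apply Subtype.ext
            push_cast
            exact hw
          have := congrArg τ heq
          simp only [map_add, map_mul, map_pow, map_zero] at this
          rw [show τ (ι ⟨p, hp⟩) = ((σ ⟨p, hp⟩ : ℝ) : ℂ) from hσval _,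
              show τ (ι ⟨q, hq⟩) = ((σ ⟨q, hq⟩ : ℝ) : ℂ) from hσval _] at this
          exact factA (σ ⟨p, hp⟩) (σ ⟨q, hq⟩) hdisc _ this
      | one => simp [show (⟨1, _⟩ : L) = 1 from rfl]
      | add x y hx hy ihx ihy =>
        have : (⟨x + y, _⟩ : L) = ⟨x, hx⟩ + ⟨y, hy⟩ := rfl
        rw [this, map_add, Complex.add_im, ihx, ihy]; ring
      | neg x hx ihx =>
        have : (⟨-x, _⟩ : L) = -⟨x, hx⟩ := rfl
        rw [this, map_neg, Complex.neg_im, ihx]; ring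
      | inv x hx ihx =>
        have : (⟨x⁻¹, _⟩ : L) = (⟨x, hx⟩ : L)⁻¹ := rfl
        rw [this, map_inv₀, Complex.inv_im, ihx]; simp
      | mul x y hx hy ihx ihy =>
        have : (⟨x * y, _⟩ : L) = ⟨x, hx⟩ * ⟨y, hy⟩ := rfl
        rw [this, map_mul, Complex.mul_im, ihx, ihy]; ring
    have := main x.1 x.2
    simpa using this
end

section
/- Let K be a subfield of ℝ that is a finite extension of ℚ and is totally real, and let f(X) = X³ + pX + q with p, q ∈ K be irreducible over K. If the splitting field L ⊆ ℂ of f over K is totally real, then −p is totally positive in K, i.e., σ(p) < 0 for every field embedding σ : K → ℝ. -/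
set_option maxHeartbeats 2000000
set_option synthInstance.maxHeartbeats 2000000

open Polynomial in
/-- For a totally real finite extension `K ⊆ ℝ` of ℚ and an irreducible
cubic `f = X³ + pX + q` over `K`, if the splitting field `L ⊆ ℂ` of `f` over `K` is
totally real, then `-p` is totally positive in `K`: `σ(p) < 0` for every `σ : K → ℝ`. -/
theorem cubic_splitting_field_totally_real_p_totally_negative
    (K : Subfield ℝ) (hfin : FiniteDimensional ℚ K)
    (hKtr : ∀ σ : K →+* ℂ, ∀ x : K, (σ x).im = 0)
    (p q : ℝ) (hp : p ∈ K) (hq : q ∈ K)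
    (hirr : Irreducible (X ^ 3 + C (⟨p, hp⟩ : K) * X + C (⟨q, hq⟩ : K)))
    (L : Subfield ℂ)
    (hL : L = Subfield.closure
      ((Complex.ofReal '' ↑K) ∪ {z : ℂ | z ^ 3 + (p : ℂ) * z + (q : ℂ) = 0}))
    (hLtr : ∀ σ : L →+* ℂ, ∀ x : L, (σ x).im = 0) :
    ∀ σ : K →+* ℝ, σ ⟨p, hp⟩ < 0 := by
  intro σ
  classical
  have hSsub : (Complex.ofReal '' ↑K) ∪ {z : ℂ | z ^ 3 + (p : ℂ) * z + (q : ℂ) = 0}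
      ⊆ (L : Set ℂ) := by
    rw [hL]; exact Subfield.subset_closure
  -- the inclusion of K into L
  let φ : K →+* ℂ := Complex.ofRealHom.comp K.subtype
  have hφ : ∀ x : K, φ x ∈ L := fun x => hSsub (Or.inl ⟨x, x.2, rfl⟩)
  let i : K →+* L := φ.codRestrict L hφ
  letI algKL : Algebra K L := i.toAlgebra
  -- L is algebraic over K
  haveI halg : Algebra.IsAlgebraic K L := by
    letI algKC : Algebra K ℂ := φ.toAlgebra
    haveI : IsScalarTower K L ℂ := IsScalarTower.of_algebraMap_eq' rfl
    have hle : L ≤ (algebraicClosure K ℂ).toSubfield := by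
      rw [hL]
      apply Subfield.closure_le.mpr
      rintro z (⟨y, hy, rfl⟩ | hz)
      · exact mem_algebraicClosure_iff.mpr (isAlgebraic_algebraMap (⟨y, hy⟩ : K))
      · refine mem_algebraicClosure_iff'.mpr
          ⟨X ^ 3 + C (⟨p, hp⟩ : K) * X + C (⟨q, hq⟩ : K), ?_, ?_⟩
        · monicity!
        · simpa [RingHom.algebraMap_toAlgebra, φ] using hz
    exact ⟨fun x => (@isAlgebraic_algebraMap_iff K L ℂ _ _ _ _ _ _ this x (algebraMap L ℂ).injective).mp
      (mem_algebraicClosure_iff.mp (hle x.2))⟩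
  -- extend σ to an embedding of L
  letI algσ : Algebra K ℂ := ((algebraMap ℝ ℂ).comp σ).toAlgebra
  haveI := (faithfulSMul_iff_algebraMap_injective K L).mpr i.injective
  haveI := (faithfulSMul_iff_algebraMap_injective K ℂ).mpr
    ((algebraMap ℝ ℂ).comp σ).injective
  let τ : L →ₐ[K] ℂ := IsAlgClosed.lift
  -- the roots of the cubic over ℂ
  let fC : ℂ[X] := X ^ 3 + C (p : ℂ) * X + C (q : ℂ)
  have hfC : fC = (X ^ 3 + C (⟨p, hp⟩ : K) * X + C (⟨q, hq⟩ : K)).map φ := by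
    simp only [Polynomial.map_add, Polynomial.map_mul, Polynomial.map_pow, map_X, map_C]
    rfl
  have hsepC : fC.Separable := hfC ▸ (hirr.separable).map
  have hnodup : fC.roots.Nodup := Polynomial.nodup_roots hsepC
  have hdeg : fC.natDegree = 3 := by unfold fC; compute_degree!
  have hne0 : fC ≠ 0 := fun h => by simp [h] at hdeg
  have hcard : fC.roots.card = 3 := by
    rw [← hdeg]
    exact (splits_iff_card_roots).mp (IsAlgClosed.splits fC)
  obtain ⟨r₁, hr₁⟩ := Multiset.card_pos_iff_exists_mem.mp (by rw [hcard]; norm_num)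
  obtain ⟨r₂, hr₂e⟩ := Multiset.card_pos_iff_exists_mem.mp
    (show 0 < Multiset.card (fC.roots.erase r₁) by
      rw [Multiset.card_erase_of_mem hr₁, hcard]; norm_num)
  have hr₂ : r₂ ∈ fC.roots := Multiset.mem_of_mem_erase hr₂e
  have hne : r₂ ≠ r₁ := ((Multiset.Nodup.mem_erase_iff hnodup).mp hr₂e).1
  have hroot : ∀ r ∈ fC.roots, r ^ 3 + (p : ℂ) * r + (q : ℂ) = 0 := by
    intro r hr
    have h := isRoot_of_mem_roots hr
    simpa [fC, IsRoot] using h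
  have hm : ∀ r ∈ fC.roots, r ∈ L := fun r hr => hSsub (Or.inr (hroot r hr))
  let l₁ : L := ⟨r₁, hm r₁ hr₁⟩
  let l₂ : L := ⟨r₂, hm r₂ hr₂⟩
  -- transfer the root equations through τ
  have key : ∀ l : L, (l : ℂ) ^ 3 + (p : ℂ) * (l : ℂ) + (q : ℂ) = 0 →
      (τ l) ^ 3 + ((σ ⟨p, hp⟩ : ℝ) : ℂ) * τ l + ((σ ⟨q, hq⟩ : ℝ) : ℂ) = 0 := by
    intro l hl
    have hLeq : l ^ 3 + (algebraMap K L ⟨p, hp⟩) * l + algebraMap K L ⟨q, hq⟩ = 0 := by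
      apply Subtype.ext
      push_cast
      exact hl
    have h := congrArg τ hLeq
    simp only [map_add, map_mul, map_pow, map_zero, AlgHom.commutes] at h
    exact h
  have him : ∀ l : L, (τ l).im = 0 := fun l => hLtr τ.toRingHom l
  have hreal : ∀ l : L, τ l = (((τ l).re : ℝ) : ℂ) := fun l => by
    apply Complex.ext <;> simp [him l]
  set a : ℝ := σ ⟨p, hp⟩ with ha
  set b : ℝ := σ ⟨q, hq⟩ with hb
  set s₁ : ℝ := (τ l₁).re with hs₁
  set s₂ : ℝ := (τ l₂).re with hs₂
  have e₁ : s₁ ^ 3 + a * s₁ + b = 0 := by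
    have h := key l₁ (hroot r₁ hr₁)
    rw [hreal l₁] at h
    exact_mod_cast h
  have e₂ : s₂ ^ 3 + a * s₂ + b = 0 := by
    have h := key l₂ (hroot r₂ hr₂)
    rw [hreal l₂] at h
    exact_mod_cast h
  have hsne : s₂ ≠ s₁ := by
    intro h
    apply hne
    have h2 : τ l₂ = τ l₁ := by rw [hreal l₁, hreal l₂]; exact congrArg Complex.ofReal h
    have h3 : l₂ = l₁ := τ.toRingHom.injective h2
    exact congrArg Subtype.val h3
  have hd : s₂ - s₁ ≠ 0 := sub_ne_zero.mpr hsne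
  have hkey : s₂ ^ 2 + s₂ * s₁ + s₁ ^ 2 + a = 0 := by
    have hmul : (s₂ - s₁) * (s₂ ^ 2 + s₂ * s₁ + s₁ ^ 2 + a) = 0 := by
      linear_combination e₂ - e₁
    rcases mul_eq_zero.mp hmul with h | h
    · exact absurd h hd
    · exact h
  have hpos : 0 < (s₂ - s₁) ^ 2 := lt_of_le_of_ne (sq_nonneg _) (Ne.symm (pow_ne_zero 2 hd))
  nlinarith [sq_nonneg (s₁ + s₂), hpos, hkey]
end

section
/- The polynomial X⁴ − 2X² − 1 ∈ ℚ[X] is irreducible over ℚ, the real number √(1+√2) is a root of it, and it has a root in ℂ that is not real. Consequently √(1+√2) is not totally real. -/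
open Polynomial

private lemma eisen_irred :
    Irreducible (X ^ 4 + C 4 * X ^ 3 + C 4 * X ^ 2 - C 2 : ℤ[X]) := by
  have hmon : (X ^ 4 + C 4 * X ^ 3 + C 4 * X ^ 2 - C 2 : ℤ[X]).Monic := by monicity!
  set h : ℤ[X] := X ^ 4 + C 4 * X ^ 3 + C 4 * X ^ 2 - C 2 with hh
  have hdeg : h.natDegree = 4 := by rw [hh]; compute_degree!
  have heis : h.IsEisensteinAt (Ideal.span {2}) := by
    constructor
    · rw [hmon.leadingCoeff]
      simp [Ideal.mem_span_singleton]
    · intro n hn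
      rw [hdeg] at hn
      interval_cases n <;>
        simp [hh, Ideal.mem_span_singleton, coeff_one] <;> decide
    · rw [Ideal.span_singleton_pow]
      simp [hh, Ideal.mem_span_singleton, coeff_one]
  exact heis.irreducible (Ideal.span_singleton_prime (by norm_num) |>.2 Int.prime_two)
    hmon.isPrimitive (by omega)

private lemma int_irred : Irreducible (X ^ 4 - 2 * X ^ 2 - 1 : ℤ[X]) := by
  have key : (algEquivAevalXAddC (1 : ℤ)) (X ^ 4 - 2 * X ^ 2 - 1 : ℤ[X])
      = X ^ 4 + C 4 * X ^ 3 + C 4 * X ^ 2 - C 2 := by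
    simp [algEquivAevalXAddC, map_ofNat]
    ring
  have := eisen_irred
  rw [← key] at this
  exact (MulEquiv.irreducible_iff (algEquivAevalXAddC (1 : ℤ)).toMulEquiv).mp this

open Polynomial in
/-- `X⁴ - 2X² - 1` is irreducible over ℚ, `√(1+√2)` is a root of it, and it
has a nonreal complex root; consequently `√(1+√2)` is not totally real. -/
theorem sqrt_one_add_sqrt_two_not_totally_real :
    Irreducible (X ^ 4 - 2 * X ^ 2 - 1 : ℚ[X]) ∧
    aeval (Real.sqrt (1 + Real.sqrt 2)) (X ^ 4 - 2 * X ^ 2 - 1 : ℚ[X]) = 0 ∧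
    ∃ z : ℂ, aeval z (X ^ 4 - 2 * X ^ 2 - 1 : ℚ[X]) = 0 ∧ z.im ≠ 0 := by
  have h2 : Real.sqrt 2 ^ 2 = 2 := Real.sq_sqrt (by norm_num)
  have h2pos : (0:ℝ) < Real.sqrt 2 := Real.sqrt_pos.mpr (by norm_num)
  have h1le : (1:ℝ) ≤ Real.sqrt 2 := by nlinarith
  refine ⟨?_, ?_, ?_⟩
  · have hmon : (X ^ 4 - 2 * X ^ 2 - 1 : ℤ[X]).Monic := by monicity!
    have := (Polynomial.IsPrimitive.Int.irreducible_iff_irreducible_map_cast hmon.isPrimitive).mp int_irred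
    convert this using 1
    simp
  · have hr2 : Real.sqrt (1 + Real.sqrt 2) ^ 2 = 1 + Real.sqrt 2 :=
      Real.sq_sqrt (by positivity)
    simp only [map_sub, map_mul, map_pow, aeval_X, map_ofNat, aeval_one, map_one]
    nlinarith [hr2]
  · set s : ℝ := Real.sqrt (Real.sqrt 2 - 1) with hs
    have hs2 : s ^ 2 = Real.sqrt 2 - 1 := Real.sq_sqrt (by linarith)
    have hspos : 0 < s := Real.sqrt_pos.mpr (by nlinarith)
    refine ⟨(s : ℂ) * Complex.I, ?_, by simp [hspos.ne']⟩
    simp only [map_sub, map_mul, map_pow, aeval_X, map_ofNat, aeval_one, map_one]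
    have : ((s : ℂ) * Complex.I) ^ 2 = -(s ^ 2 : ℝ) := by
      rw [mul_pow, Complex.I_sq]
      push_cast
      ring
    rw [show ((s : ℂ) * Complex.I) ^ 4 = (((s : ℂ) * Complex.I) ^ 2) ^ 2 by ring, this]
    rw [hs2]
    have h2c : ((Real.sqrt 2 : ℝ) : ℂ) ^ 2 = 2 := by exact_mod_cast congrArg Complex.ofReal h2
    push_cast
    ring_nf
    rw [show ((Real.sqrt 2 : ℝ) : ℂ) ^ 2 = 2 from h2c]
    ring
end

section
/- The real number w = (6·cos(2π/7) + 1)/(2√7) satisfies 4w³ − 3w = 1/√28. Equivalently, w = cos θ for an angle θ with cos(3θ) = 1/√28. -/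
open Real in
/-- cubic for cos(2π/7) -/
lemma cos_two_pi_div_seven_cubic :
    8 * cos (2 * π / 7) ^ 3 + 4 * cos (2 * π / 7) ^ 2 - 4 * cos (2 * π / 7) - 1 = 0 := by
  set c := cos (2 * π / 7) with hc
  have key : cos (4 * (2 * π / 7)) = cos (3 * (2 * π / 7)) := by
    have : 4 * (2 * π / 7) = 2 * π - 3 * (2 * π / 7) := by ring
    rw [this, Real.cos_two_pi_sub]
  have h4 : cos (4 * (2 * π / 7)) = 2 * (2 * c ^ 2 - 1) ^ 2 - 1 := by
    have : 4 * (2 * π / 7) = 2 * (2 * (2 * π / 7)) := by ring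
    rw [this, Real.cos_two_mul, Real.cos_two_mul, ← hc]
  have h3 : cos (3 * (2 * π / 7)) = 4 * c ^ 3 - 3 * c := Real.cos_three_mul _
  have heq : 2 * (2 * c ^ 2 - 1) ^ 2 - 1 = 4 * c ^ 3 - 3 * c := by
    rw [← h4, ← h3, key]
  have hlt : c < 1 := by
    have h1 : cos (2 * π / 7) < cos 0 := by
      apply Real.cos_lt_cos_of_nonneg_of_le_pi le_rfl
      · nlinarith [Real.pi_le_four, Real.pi_pos]
      · positivity
    simpa using h1
  have hfac : (c - 1) * (8 * c ^ 3 + 4 * c ^ 2 - 4 * c - 1) = 0 := by nlinarith [heq]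
  have : 8 * c ^ 3 + 4 * c ^ 2 - 4 * c - 1 = 0 := by
    rcases mul_eq_zero.mp hfac with h | h
    · linarith
    · exact h
  exact this

open Real in
/-- `w = (6cos(2π/7) + 1)/(2√7)` satisfies `4w³ - 3w = 1/√28`;
equivalently `w = cos θ` for an angle `θ` with `cos (3θ) = 1/√28`. -/
theorem heptagon_trisection (w : ℝ) (hw : w = (6 * cos (2 * π / 7) + 1) / (2 * Real.sqrt 7)) :
    4 * w ^ 3 - 3 * w = 1 / Real.sqrt 28 ∧
    ∃ θ : ℝ, w = cos θ ∧ cos (3 * θ) = 1 / Real.sqrt 28 := by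
  set c := cos (2 * π / 7) with hc
  have hcub := cos_two_pi_div_seven_cubic
  rw [← hc] at hcub
  have hs7 : Real.sqrt 7 ^ 2 = 7 := Real.sq_sqrt (by norm_num)
  have hs7pos : (0:ℝ) < Real.sqrt 7 := Real.sqrt_pos.mpr (by norm_num)
  have h28 : Real.sqrt 28 = 2 * Real.sqrt 7 := by
    rw [show (28:ℝ) = 4 * 7 by norm_num, Real.sqrt_mul (by norm_num)]
    norm_num [Real.sqrt_eq_iff_eq_sq]
  have hmain : 4 * w ^ 3 - 3 * w = 1 / Real.sqrt 28 := by
    rw [hw, h28]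
    field_simp
    linear_combination 108 * hcub + (-72 * c - 16) * hs7
  refine ⟨hmain, ?_⟩
  -- bounds on w
  have hcpos : 0 < c := by
    rw [hc]
    apply Real.cos_pos_of_mem_Ioo
    constructor
    · nlinarith [Real.pi_pos]
    · nlinarith [Real.pi_pos]
  have hclt : c < Real.sqrt 2 / 2 := by
    have : cos (2 * π / 7) < cos (π / 4) := by
      apply Real.cos_lt_cos_of_nonneg_of_le_pi (by positivity)
      · nlinarith [Real.pi_pos]
      · nlinarith [Real.pi_pos]
    rwa [Real.cos_pi_div_four] at this
  have hs2 : Real.sqrt 2 ^ 2 = 2 := Real.sq_sqrt (by norm_num)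
  have hs2lt : Real.sqrt 2 < 1.5 := by
    nlinarith [Real.sqrt_nonneg 2, hs2]
  have hwlt : w < 1 := by
    rw [hw, div_lt_one (by positivity)]
    nlinarith [hs7, hs7pos, Real.sqrt_nonneg 2]
  have hwpos : 0 < w := by
    rw [hw]
    positivity
  refine ⟨Real.arccos w, (Real.cos_arccos (by linarith) (by linarith)).symm, ?_⟩
  rw [Real.cos_three_mul, Real.cos_arccos (by linarith) (by linarith)]
  exact hmain
end

section
/- The identity 4·sin²(2π/7) = 3·cos²(π/7) + 4·cos⁴(3π/7) holds for the real sine and cosine functions. -/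
open Real in
/-- `4sin²(2π/7) = 3cos²(π/7) + 4cos⁴(3π/7)`. -/
theorem sin_sq_two_pi_div_seven :
    4 * sin (2 * π / 7) ^ 2 = 3 * cos (π / 7) ^ 2 + 4 * cos (3 * π / 7) ^ 4 := by
  have h2 : cos (2 * π / 7) = 2 * cos (π / 7) ^ 2 - 1 := by
    rw [show (2 * π / 7) = 2 * (π / 7) by ring, cos_two_mul]
  have h3 : cos (3 * π / 7) = 4 * cos (π / 7) ^ 3 - 3 * cos (π / 7) := by
    rw [show (3 * π / 7) = 3 * (π / 7) by ring, cos_three_mul]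
  have h4 : cos (4 * π / 7) = 2 * cos (2 * π / 7) ^ 2 - 1 := by
    rw [show (4 * π / 7) = 2 * (2 * π / 7) by ring, cos_two_mul]
  have h4' : cos (4 * π / 7) = - cos (3 * π / 7) := by
    rw [show (4 * π / 7) = π - 3 * π / 7 by ring, cos_pi_sub]
  have hs : sin (2 * π / 7) ^ 2 = 1 - cos (2 * π / 7) ^ 2 := by
    have := sin_sq_add_cos_sq (2 * π / 7); linarith
  have hpos : 0 < cos (π / 7) := by
    apply cos_pos_of_mem_Ioo
    constructor <;> [nlinarith [pi_pos]; nlinarith [pi_pos]]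
  set c := cos (π / 7)
  have hcubic : 8 * c ^ 3 - 4 * c ^ 2 - 4 * c + 1 = 0 := by
    have : (c + 1) * (8 * c ^ 3 - 4 * c ^ 2 - 4 * c + 1) = 0 := by
      rw [h2] at h4; rw [h3] at h4'
      linear_combination h4' - h4
    have hne : c + 1 ≠ 0 := by positivity
    exact (mul_eq_zero.mp this).resolve_left hne
  rw [hs, h2, h3]
  linear_combination (-(128*c^9 + 64*c^8 - 288*c^7 - 128*c^6 + 216*c^5 + 80*c^4 - 52*c^3 - 13*c^2)) * hcubic
end

section
/- Let a, b ∈ ℂ with |a| > 1, |b| > 1, and b = k·conj(a) for some real k > 0. Set q = Re(a·b), r = Re(a+b), s = Im(a+b), and τ = (s² + r² − 4q²)/4. Then every complex root of the cubic polynomial f(λ) = λ³ + τλ + q·r·s/2 is real, i.e., f has three real roots. -/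
private lemma amgm3 (A B : ℝ) (hA : 0 ≤ A) (hB : 0 ≤ B) :
    27 * A ^ 2 * B ≤ (2 * A + B) ^ 3 := by
  nlinarith [sq_nonneg (B - A), mul_nonneg hA hB, mul_nonneg hA hA]

private lemma cube_lemma (u v N : ℝ) (hu : 0 ≤ u) (hv : 0 ≤ v)
    (hN : 4 * (u + v) ^ 3 ≤ N) :
    432 * N * u ^ 3 * v ^ 3 ≤ (N - 4 * u ^ 3 - 4 * v ^ 3) ^ 3 := by
  set d := N - 4 * (u + v) ^ 3 with hd
  have hd0 : 0 ≤ d := by simp [hd]; linarith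
  have key : (N - 4 * u ^ 3 - 4 * v ^ 3) ^ 3 - 432 * N * u ^ 3 * v ^ 3 =
      d ^ 3 + 36 * d ^ 2 * (u * v * (u + v)) +
        432 * d * (u ^ 2 * v ^ 2 * (u ^ 2 + u * v + v ^ 2)) := by
    have hNd : N = d + 4 * (u + v) ^ 3 := by simp [hd]
    rw [hNd]; ring
  have h1 : 0 ≤ d ^ 3 := pow_nonneg hd0 3
  have h2 : 0 ≤ 36 * d ^ 2 * (u * v * (u + v)) := by positivity
  have h3 : 0 ≤ 432 * d * (u ^ 2 * v ^ 2 * (u ^ 2 + u * v + v ^ 2)) := by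
    have : 0 ≤ u ^ 2 + u * v + v ^ 2 := by positivity
    positivity
  linarith

private lemma main_ineq (P Q M X e u v : ℝ) (hX : 0 < X) (he : 0 < e)
    (hu : 0 ≤ u) (hv : 0 ≤ v) (hP0 : 0 ≤ P) (hQ0 : 0 ≤ Q) (hM0 : 0 ≤ M)
    (hP : e * P * X ^ 2 ≤ 4 * u ^ 3) (hQ : e * Q * X ^ 2 ≤ 4 * v ^ 3)
    (hN : 4 * (u + v) ^ 3 ≤ e * M * X ^ 2) :
    27 * M * P * Q ≤ (M - P - Q) ^ 3 := by
  set N := e * M * X ^ 2 with hNdef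
  have hcube := cube_lemma u v N hu hv hN
  have huv3 : 4 * u ^ 3 + 4 * v ^ 3 ≤ 4 * (u + v) ^ 3 := by
    nlinarith [mul_nonneg hu hv, add_nonneg hu hv,
      mul_nonneg (mul_nonneg hu hv) (add_nonneg hu hv)]
  have h0 : 0 ≤ N - 4 * u ^ 3 - 4 * v ^ 3 := by linarith
  have h1 : N - 4 * u ^ 3 - 4 * v ^ 3 ≤ (M - P - Q) * (e * X ^ 2) := by
    have : (M - P - Q) * (e * X ^ 2) = N - e * P * X ^ 2 - e * Q * X ^ 2 := by
      rw [hNdef]; ring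
    rw [this]; linarith
  have hEX : 0 < e * X ^ 2 := by positivity
  have h2 : (N - 4 * u ^ 3 - 4 * v ^ 3) ^ 3 ≤ ((M - P - Q) * (e * X ^ 2)) ^ 3 :=
    pow_le_pow_left₀ h0 h1 3
  have h3 : 27 * M * P * Q * (e * X ^ 2) ^ 3 ≤ 432 * N * u ^ 3 * v ^ 3 := by
    have e1 : 27 * M * P * Q * (e * X ^ 2) ^ 3 =
        27 * (M * (e * X ^ 2)) * ((e * P * X ^ 2) * (e * Q * X ^ 2)) := by ring
    have e2 : (432 : ℝ) * N * u ^ 3 * v ^ 3 =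
        27 * (M * (e * X ^ 2)) * ((4 * u ^ 3) * (4 * v ^ 3)) := by rw [hNdef]; ring
    rw [e1, e2]
    have hMe : 0 ≤ M * (e * X ^ 2) := mul_nonneg hM0 hEX.le
    have hPe : 0 ≤ e * P * X ^ 2 := by positivity
    have h4 : (e * P * X ^ 2) * (e * Q * X ^ 2) ≤ (4 * u ^ 3) * (4 * v ^ 3) := by
      have hQe : 0 ≤ e * Q * X ^ 2 := by positivity
      have hu3 : 0 ≤ 4 * u ^ 3 := by positivity
      exact mul_le_mul hP hQ hQe hu3
    nlinarith [mul_le_mul_of_nonneg_left h4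
      (by positivity : (0:ℝ) ≤ 27 * (M * (e * X ^ 2)))]
  have h5 : 27 * M * P * Q * (e * X ^ 2) ^ 3 ≤ (M - P - Q) ^ 3 * (e * X ^ 2) ^ 3 := by
    calc 27 * M * P * Q * (e * X ^ 2) ^ 3 ≤ 432 * N * u ^ 3 * v ^ 3 := h3
    _ ≤ (N - 4 * u ^ 3 - 4 * v ^ 3) ^ 3 := hcube
    _ ≤ ((M - P - Q) * (e * X ^ 2)) ^ 3 := h2
    _ = (M - P - Q) ^ 3 * (e * X ^ 2) ^ 3 := by ring
  exact le_of_mul_le_mul_right h5 (by positivity)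

private lemma disc_key (x y k : ℝ) (hk : 0 < k) (hX : 1 < x ^ 2 + y ^ 2)
    (hkX : 1 < k ^ 2 * (x ^ 2 + y ^ 2)) :
    27 * (4 * k ^ 2 * (x ^ 2 + y ^ 2) ^ 2) * ((1 + k) ^ 2 * x ^ 2) *
        ((1 - k) ^ 2 * y ^ 2) ≤
      (4 * k ^ 2 * (x ^ 2 + y ^ 2) ^ 2 - (1 + k) ^ 2 * x ^ 2 -
        (1 - k) ^ 2 * y ^ 2) ^ 3 := by
  have hX0 : (0:ℝ) < x ^ 2 + y ^ 2 := by linarith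
  rcases le_or_gt k 1 with hk1 | hk1
  · -- k ≤ 1, e = 1
    refine main_ineq _ _ _ (x ^ 2 + y ^ 2) 1
      (((1 + k) * (x ^ 2 + y ^ 2) + x ^ 2) / 3)
      (((1 - k) * (x ^ 2 + y ^ 2) + y ^ 2) / 3)
      hX0 one_pos ?_ ?_ (by positivity) (by positivity) (by positivity) ?_ ?_ ?_
    · positivity
    · have h1k : (0:ℝ) ≤ 1 - k := by linarith
      positivity
    · have ham := amgm3 ((1 + k) * (x ^ 2 + y ^ 2) / 2) (x ^ 2)
        (by positivity) (by positivity)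
      have e3 : (2 * ((1 + k) * (x ^ 2 + y ^ 2) / 2) + x ^ 2) ^ 3 =
          27 * (((1 + k) * (x ^ 2 + y ^ 2) + x ^ 2) / 3) ^ 3 := by ring
      have e4 : 1 * ((1 + k) ^ 2 * x ^ 2) * (x ^ 2 + y ^ 2) ^ 2 =
          4 * (((1 + k) * (x ^ 2 + y ^ 2) / 2) ^ 2 * x ^ 2) := by ring
      rw [e3] at ham
      linarith
    · have h1k : (0:ℝ) ≤ (1 - k) * (x ^ 2 + y ^ 2) / 2 := by nlinarith
      have ham := amgm3 ((1 - k) * (x ^ 2 + y ^ 2) / 2) (y ^ 2) h1k (by positivity)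
      have e3 : (2 * ((1 - k) * (x ^ 2 + y ^ 2) / 2) + y ^ 2) ^ 3 =
          27 * (((1 - k) * (x ^ 2 + y ^ 2) + y ^ 2) / 3) ^ 3 := by ring
      have e4 : 1 * ((1 - k) ^ 2 * y ^ 2) * (x ^ 2 + y ^ 2) ^ 2 =
          4 * (((1 - k) * (x ^ 2 + y ^ 2) / 2) ^ 2 * y ^ 2) := by ring
      rw [e3] at ham
      linarith
    · have huv : ((1 + k) * (x ^ 2 + y ^ 2) + x ^ 2) / 3 +
          ((1 - k) * (x ^ 2 + y ^ 2) + y ^ 2) / 3 = x ^ 2 + y ^ 2 := by ring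
      rw [huv]
      have h := mul_nonneg (by linarith : (0:ℝ) ≤ k ^ 2 * (x ^ 2 + y ^ 2) - 1)
        (le_of_lt (pow_pos hX0 3))
      nlinarith [h]
  · -- k > 1, e = k
    refine main_ineq _ _ _ (x ^ 2 + y ^ 2) k
      (((1 + k) * (x ^ 2 + y ^ 2) + k * x ^ 2) / 3)
      (((k - 1) * (x ^ 2 + y ^ 2) + k * y ^ 2) / 3)
      hX0 hk ?_ ?_ (by positivity) (by positivity) (by positivity) ?_ ?_ ?_
    · positivity
    · have h1k : (0:ℝ) ≤ k - 1 := by linarith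
      positivity
    · have ham := amgm3 ((1 + k) * (x ^ 2 + y ^ 2) / 2) (k * x ^ 2)
        (by positivity) (by positivity)
      have e3 : (2 * ((1 + k) * (x ^ 2 + y ^ 2) / 2) + k * x ^ 2) ^ 3 =
          27 * (((1 + k) * (x ^ 2 + y ^ 2) + k * x ^ 2) / 3) ^ 3 := by ring
      have e4 : k * ((1 + k) ^ 2 * x ^ 2) * (x ^ 2 + y ^ 2) ^ 2 =
          4 * (((1 + k) * (x ^ 2 + y ^ 2) / 2) ^ 2 * (k * x ^ 2)) := by ring
      rw [e3] at ham
      linarith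
    · have h1k : (0:ℝ) ≤ (k - 1) * (x ^ 2 + y ^ 2) / 2 := by nlinarith
      have ham := amgm3 ((k - 1) * (x ^ 2 + y ^ 2) / 2) (k * y ^ 2) h1k (by positivity)
      have e3 : (2 * ((k - 1) * (x ^ 2 + y ^ 2) / 2) + k * y ^ 2) ^ 3 =
          27 * (((k - 1) * (x ^ 2 + y ^ 2) + k * y ^ 2) / 3) ^ 3 := by ring
      have e4 : k * ((1 - k) ^ 2 * y ^ 2) * (x ^ 2 + y ^ 2) ^ 2 =
          4 * (((k - 1) * (x ^ 2 + y ^ 2) / 2) ^ 2 * (k * y ^ 2)) := by ring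
      rw [e3] at ham
      linarith
    · have huv : ((1 + k) * (x ^ 2 + y ^ 2) + k * x ^ 2) / 3 +
          ((k - 1) * (x ^ 2 + y ^ 2) + k * y ^ 2) / 3 = k * (x ^ 2 + y ^ 2) := by ring
      rw [huv]
      have h := mul_nonneg (by linarith : (0:ℝ) ≤ (x ^ 2 + y ^ 2) - 1)
        (le_of_lt (mul_pos (pow_pos hk 3) (pow_pos hX0 3)))
      nlinarith [h]

open Complex in
/-- For `a b : ℂ` exterior to the unit circle with `b = k·conj a`, `k > 0`,
every complex root of `λ³ + τλ + qrs/2` (with `q = Re(ab)`, `r = Re(a+b)`, `s = Im(a+b)`,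
`τ = (s² + r² - 4q²)/4`) is real. -/
theorem alhazen_pencil_cubic_totally_real (a b : ℂ) (ha : 1 < ‖a‖)
    (hb : 1 < ‖b‖) (k : ℝ) (hk : 0 < k) (hba : b = (k : ℂ) * starRingEnd ℂ a)
    (q r s τ : ℝ) (hq : q = (a * b).re) (hr : r = (a + b).re) (hs : s = (a + b).im)
    (hτ : τ = (s ^ 2 + r ^ 2 - 4 * q ^ 2) / 4) :
    ∀ z : ℂ, z ^ 3 + (τ : ℂ) * z + ((q * r * s / 2 : ℝ) : ℂ) = 0 → z.im = 0 := by
  have hbre : b.re = k * a.re := by rw [hba]; simp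
  have hbim : b.im = -(k * a.im) := by rw [hba]; simp
  have hX : 1 < a.re ^ 2 + a.im ^ 2 := by
    have h1 : 1 < (‖a‖) ^ 2 := by nlinarith [ha, norm_nonneg a]
    rw [Complex.sq_norm, Complex.normSq_apply] at h1
    nlinarith [h1]
  have hkX : 1 < k ^ 2 * (a.re ^ 2 + a.im ^ 2) := by
    have h1 : 1 < (‖b‖) ^ 2 := by nlinarith [hb, norm_nonneg b]
    rw [Complex.sq_norm, Complex.normSq_apply, hbre, hbim] at h1
    nlinarith [h1]
  have hq' : q = k * (a.re ^ 2 + a.im ^ 2) := by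
    rw [hq, Complex.mul_re, hbre, hbim]; ring
  have hr' : r = (1 + k) * a.re := by
    rw [hr, Complex.add_re, hbre]; ring
  have hs' : s = (1 - k) * a.im := by
    rw [hs, Complex.add_im, hbim]; ring
  have hdisc : 4 * τ ^ 3 + 27 * (q * r * s / 2) ^ 2 ≤ 0 := by
    have hkey := disc_key a.re a.im k hk hX hkX
    have e1 : 4 * τ ^ 3 + 27 * (q * r * s / 2) ^ 2 =
        (27 * (4 * k ^ 2 * (a.re ^ 2 + a.im ^ 2) ^ 2) * ((1 + k) ^ 2 * a.re ^ 2) *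
            ((1 - k) ^ 2 * a.im ^ 2) -
          (4 * k ^ 2 * (a.re ^ 2 + a.im ^ 2) ^ 2 - (1 + k) ^ 2 * a.re ^ 2 -
            (1 - k) ^ 2 * a.im ^ 2) ^ 3) / 16 := by
      rw [hτ, hq', hr', hs']; ring
    rw [e1]; linarith
  intro z hz
  by_contra hβ
  rw [Complex.ext_iff] at hz
  obtain ⟨hre, him⟩ := hz
  simp only [Complex.add_re, Complex.add_im, Complex.mul_re, Complex.mul_im,
    Complex.ofReal_re, Complex.ofReal_im, Complex.zero_re, Complex.zero_im,
    pow_succ, pow_zero, one_mul, zero_mul, mul_zero, zero_sub, sub_zero,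
    zero_add, add_zero, neg_zero] at hre him
  have hfac : z.im * (3 * z.re ^ 2 - z.im ^ 2 + τ) = 0 := by linear_combination him
  have hτ2 : τ = z.im ^ 2 - 3 * z.re ^ 2 := by
    rcases mul_eq_zero.mp hfac with h | h
    · exact absurd h hβ
    · linarith
  have hc : q * r * s / 2 = 2 * z.re ^ 3 + 2 * z.re * z.im ^ 2 := by
    linear_combination hre - z.re * hτ2
  have hsum : 4 * τ ^ 3 + 27 * (q * r * s / 2) ^ 2 =
      4 * z.im ^ 2 * (z.im ^ 2 + 9 * z.re ^ 2) ^ 2 := by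
    rw [hτ2, hc]; ring
  rw [hsum] at hdisc
  have hpos : 0 < 4 * z.im ^ 2 * (z.im ^ 2 + 9 * z.re ^ 2) ^ 2 := by positivity
  linarith
end
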